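/- For every even natural number m ≥ 2, in the formal power series ring ℚ⟦X⟧ one has 4 · (coefficient of X^m in (1+X)^{m+3} · ((1+2X)⁻¹)²) = 2m + 4. (This computes the topological Euler characteristic χ(X) = 2m+4 of a smooth complete intersection X of two quadrics in ℂP^{m+2}, via χ(X) = ∫_{P^{m+2}} 4ω² c_m(T_X) with c(T_X) = (1+ω)^{m+3}/(1+2ω)².) -/

import Mathlib

open PowerSeries

noncomputable def Jser : ℚ⟦X⟧ := PowerSeries.mk fun n => (-2 : ℚ) ^ n

lemma Jser_mul : (1 + 2 * PowerSeries.X) * Jser = 1 := by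
  ext n
  cases n with
  | zero => simp [Jser]
  | succ n =>
      rw [add_mul, mul_assoc, one_mul,
        show (2:ℚ⟦X⟧) * (PowerSeries.X * Jser)
          = PowerSeries.X * Jser + PowerSeries.X * Jser by ring, map_add, map_add]
      simp [Jser, PowerSeries.coeff_succ_X_mul]
      ring

lemma Jser_inv : (1 + 2 * PowerSeries.X : ℚ⟦X⟧)⁻¹ = Jser := by
  rw [PowerSeries.inv_eq_iff_mul_eq_one (by simp)]
  rw [mul_comm]; exact Jser_mul

lemma coeff_one_add_X_pow (n k : ℕ) :
    PowerSeries.coeff (R := ℚ) k ((1 + PowerSeries.X) ^ n) = n.choose k := by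
  have : ((1 + Polynomial.X : Polynomial ℚ) ^ n : Polynomial ℚ) = _ := rfl
  rw [show ((1 + PowerSeries.X : ℚ⟦X⟧)) = ((1 + Polynomial.X : Polynomial ℚ) : ℚ⟦X⟧) by
    push_cast; ring]
  rw [← Polynomial.coe_pow, Polynomial.coeff_coe, Polynomial.coeff_one_add_X_pow]

lemma gLem (k : ℕ) :
    PowerSeries.coeff (R := ℚ) (2*k+2) ((1 + PowerSeries.X) ^ (2*k+3) * Jser) = 1 := by
  induction k with
  | zero =>
      rw [PowerSeries.coeff_mul, Finset.Nat.sum_antidiagonal_eq_sum_range_succ_mk]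
      simp [coeff_one_add_X_pow, Jser, Finset.sum_range_succ]
      norm_num
  | succ k ih =>
      have hexp : ((1 + PowerSeries.X) ^ (2*(k+1)+3) : ℚ⟦X⟧) * Jser
          = (1 + PowerSeries.X) ^ (2*k+3)
            + (1 + PowerSeries.X) ^ (2*k+3) * Jser * PowerSeries.X ^ 2 := by
        have h2 : ((1 + PowerSeries.X) ^ (2*(k+1)+3) : ℚ⟦X⟧)
            = (1 + PowerSeries.X) ^ (2*k+3) * ((1 + 2 * PowerSeries.X) + PowerSeries.X ^ 2) := by
          rw [show 2*(k+1)+3 = (2*k+3) + 2 by ring, pow_add]; ring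
        rw [h2, mul_add, add_mul]
        rw [show (1 + PowerSeries.X) ^ (2*k+3) * (1 + 2 * PowerSeries.X) * Jser
            = (1 + PowerSeries.X) ^ (2*k+3) * ((1 + 2 * PowerSeries.X) * Jser) by ring,
          Jser_mul, mul_one]
        ring
      rw [hexp, map_add]
      rw [show 2*(k+1)+2 = (2*k+2) + 2 by ring]
      rw [PowerSeries.coeff_mul_X_pow, ih, coeff_one_add_X_pow]
      rw [Nat.choose_eq_zero_of_lt (by omega)]
      norm_num

lemma fLem (k : ℕ) :
    PowerSeries.coeff (R := ℚ) (2*k) ((1 + PowerSeries.X) ^ (2*k+3) * Jser ^ 2) = k + 1 := by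
  induction k with
  | zero =>
      rw [show ((2*0 : ℕ)) = 0 from rfl, PowerSeries.coeff_zero_eq_constantCoeff]
      simp [Jser]
  | succ k ih =>
      have hexp : ((1 + PowerSeries.X) ^ (2*(k+1)+3) : ℚ⟦X⟧) * Jser ^ 2
          = (1 + PowerSeries.X) ^ (2*k+3) * Jser
            + (1 + PowerSeries.X) ^ (2*k+3) * Jser ^ 2 * PowerSeries.X ^ 2 := by
        have h2 : ((1 + PowerSeries.X) ^ (2*(k+1)+3) : ℚ⟦X⟧)
            = (1 + PowerSeries.X) ^ (2*k+3) * ((1 + 2 * PowerSeries.X) + PowerSeries.X ^ 2) := by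
          rw [show 2*(k+1)+3 = (2*k+3) + 2 by ring, pow_add]; ring
        rw [h2]
        linear_combination ((1 + PowerSeries.X) ^ (2*k+3) * Jser) * Jser_mul
      rw [hexp, map_add]
      rw [show 2*(k+1) = (2*k) + 2 by ring]
      rw [PowerSeries.coeff_mul_X_pow, ih, gLem]
      push_cast; ring

/-- For every even natural number `m ≥ 2`, in `ℚ⟦X⟧` one has
`4 * coeff X^m ((1+X)^(m+3) * ((1+2X)⁻¹)^2) = 2m + 4`. -/
theorem euler_char_coeff (m : ℕ) (hm : Even m) (h2 : 2 ≤ m) :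
    4 * (PowerSeries.coeff (R := ℚ) m
      ((1 + PowerSeries.X) ^ (m + 3) * ((1 + 2 * PowerSeries.X)⁻¹) ^ 2))
      = 2 * (m : ℚ) + 4 := by
  obtain ⟨k, hk⟩ := hm
  have hm2 : m = 2 * k := by omega
  subst hm2
  rw [Jser_inv, show 2*k+3 = 2*k+3 from rfl, fLem]
  push_cast; ring
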